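/- arXiv:2111.12836 — 4 statements merged into one kernel-verified Lean document; each statement's English description precedes it below -/
import Mathlib

section
/- Let u : ℝ × [0,1] → ℝ be continuous with continuous partial derivative ∂_y u, suppose u(x,0) = 0 for every x ∈ ℝ, and suppose ∂_y u is square-integrable on S = ℝ × (0,1). Then u is square-integrable on S and ∫_S u(x,y)² dx dy ≤ (1/2) ∫_S (∂_y u)(x,y)² dx dy. -/
noncomputable section

open MeasureTheory Set

lemma cs_interval {f : ℝ → ℝ} {y : ℝ} (hy : 0 < y)
    (hf : IntervalIntegrable f volume 0 y)
    (hf2 : IntervalIntegrable (fun t => f t ^ 2) volume 0 y) :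
    (∫ t in (0:ℝ)..y, f t) ^ 2 ≤ y * ∫ t in (0:ℝ)..y, f t ^ 2 := by
  set I := ∫ t in (0:ℝ)..y, f t with hI
  have key : 0 ≤ ∫ t in (0:ℝ)..y, (f t - I / y) ^ 2 :=
    intervalIntegral.integral_nonneg hy.le fun t _ => sq_nonneg _
  have expand : ∫ t in (0:ℝ)..y, (f t - I / y) ^ 2
      = (∫ t in (0:ℝ)..y, f t ^ 2) - I ^ 2 / y := by
    have h1 : ∀ t, (f t - I / y) ^ 2 = (f t ^ 2 - (2 * (I / y)) * f t) + (I / y) ^ 2 := by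
      intro t; ring
    simp_rw [h1]
    rw [intervalIntegral.integral_add (hf2.sub (hf.const_mul _)) intervalIntegrable_const,
      intervalIntegral.integral_sub hf2 (hf.const_mul _),
      intervalIntegral.integral_const_mul, intervalIntegral.integral_const, ← hI]
    field_simp
    have hy0 : y ≠ 0 := hy.ne'
    have hcan : y * (y - 0) • (I ^ 2 / y ^ 2) = I ^ 2 := by
      rw [sub_zero, smul_eq_mul, ← mul_assoc, ← sq, mul_div_assoc', mul_comm, mul_div_assoc,
        div_self (pow_ne_zero 2 hy0), mul_one]
    rw [hcan]
    ring
  rw [expand] at key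
  have h2 : I ^ 2 / y ≤ ∫ t in (0:ℝ)..y, f t ^ 2 := by linarith
  calc I ^ 2 = y * (I ^ 2 / y) := by field_simp
  _ ≤ y * ∫ t in (0:ℝ)..y, f t ^ 2 := mul_le_mul_of_nonneg_left h2 hy.le

/-- The Poincaré inequality on the strip `S = ℝ × (0,1)` with
constant `1/2`, for functions vanishing on the bottom boundary `y = 0`. -/
theorem poincare_strip (u uy : ℝ → ℝ → ℝ)
    (hu : ContinuousOn (fun q : ℝ × ℝ => u q.1 q.2) ((univ : Set ℝ) ×ˢ Icc (0:ℝ) 1))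
    (huy : ContinuousOn (fun q : ℝ × ℝ => uy q.1 q.2) ((univ : Set ℝ) ×ˢ Icc (0:ℝ) 1))
    (hderiv : ∀ x : ℝ, ∀ y ∈ Icc (0:ℝ) 1,
      HasDerivWithinAt (u x) (uy x y) (Icc (0:ℝ) 1) y)
    (h0 : ∀ x : ℝ, u x 0 = 0)
    (hint : IntegrableOn (fun q : ℝ × ℝ => uy q.1 q.2 ^ 2)
      ((univ : Set ℝ) ×ˢ Ioo (0:ℝ) 1)) :
    IntegrableOn (fun q : ℝ × ℝ => u q.1 q.2 ^ 2) ((univ : Set ℝ) ×ˢ Ioo (0:ℝ) 1) ∧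
    (∫ q in (univ : Set ℝ) ×ˢ Ioo (0:ℝ) 1, u q.1 q.2 ^ 2) ≤
      (1/2) * ∫ q in (univ : Set ℝ) ×ˢ Ioo (0:ℝ) 1, uy q.1 q.2 ^ 2 := by
  set ν : Measure ℝ := volume.restrict (Ioo (0:ℝ) 1) with hν
  have hrestr : (volume : Measure (ℝ × ℝ)).restrict ((univ : Set ℝ) ×ˢ Ioo (0:ℝ) 1)
      = (volume : Measure ℝ).prod ν := by
    rw [Measure.volume_eq_prod, ← Measure.prod_restrict, Measure.restrict_univ]
  -- continuity of slices
  have hconu : ∀ x : ℝ, ContinuousOn (u x) (Icc (0:ℝ) 1) := fun x =>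
    hu.comp (Continuous.continuousOn (continuous_const.prodMk continuous_id))
      (fun y hy => ⟨mem_univ x, hy⟩)
  have hconuy : ∀ x : ℝ, ContinuousOn (uy x) (Icc (0:ℝ) 1) := fun x =>
    huy.comp (Continuous.continuousOn (continuous_const.prodMk continuous_id))
      (fun y hy => ⟨mem_univ x, hy⟩)
  -- FTC
  have hftc : ∀ x : ℝ, ∀ y ∈ Icc (0:ℝ) 1, u x y = ∫ t in (0:ℝ)..y, uy x t := by
    intro x y hy
    rcases eq_or_lt_of_le hy.1 with h | h
    · simp [← h, h0 x]
    · have hcont : ContinuousOn (u x) (Icc 0 y) := (hconu x).mono (Icc_subset_Icc le_rfl hy.2)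
      have hd : ∀ t ∈ Ioo (0:ℝ) y, HasDerivWithinAt (u x) (uy x t) (Ioi t) t := by
        intro t ht
        have ht1 : t ∈ Ioo (0:ℝ) 1 := ⟨ht.1, lt_of_lt_of_le ht.2 hy.2⟩
        exact (hderiv x t ⟨ht1.1.le, ht1.2.le⟩).mono_of_mem_nhdsWithin
          (nhdsWithin_le_nhds (Icc_mem_nhds ht1.1 ht1.2))
      have hi : IntervalIntegrable (uy x) volume 0 y :=
        ((hconuy x).mono (Icc_subset_Icc le_rfl hy.2)).intervalIntegrable_of_Icc hy.1
      have := intervalIntegral.integral_eq_sub_of_hasDeriv_right_of_le hy.1 hcont hd hi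
      rw [this, h0 x, sub_zero]
  -- G
  set G : ℝ → ℝ := fun x => ∫ t in Ioo (0:ℝ) 1, uy x t ^ 2 with hG
  have hGnonneg : ∀ x, 0 ≤ G x := fun x =>
    setIntegral_nonneg measurableSet_Ioo fun t _ => sq_nonneg _
  have huy2int : ∀ x : ℝ, ∀ y ∈ Icc (0:ℝ) 1,
      IntervalIntegrable (fun t => uy x t ^ 2) volume 0 y := fun x y hy =>
    (((hconuy x).pow 2).mono (Icc_subset_Icc le_rfl hy.2)).intervalIntegrable_of_Icc hy.1
  have hGeq : ∀ x : ℝ, ∫ t in (0:ℝ)..1, uy x t ^ 2 = G x := by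
    intro x
    rw [intervalIntegral.integral_of_le (by norm_num : (0:ℝ) ≤ 1),
      integral_Ioc_eq_integral_Ioo]
  -- pointwise bound
  have hpt : ∀ x : ℝ, ∀ y ∈ Ioo (0:ℝ) 1, u x y ^ 2 ≤ y * G x := by
    intro x y hy
    have hy' : y ∈ Icc (0:ℝ) 1 := ⟨hy.1.le, hy.2.le⟩
    have hi : IntervalIntegrable (uy x) volume 0 y :=
      ((hconuy x).mono (Icc_subset_Icc le_rfl hy'.2)).intervalIntegrable_of_Icc hy'.1
    have hcs := cs_interval hy.1 hi (huy2int x y hy')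
    have hmono : ∫ t in (0:ℝ)..y, uy x t ^ 2 ≤ ∫ t in (0:ℝ)..1, uy x t ^ 2 := by
      apply intervalIntegral.integral_mono_interval le_rfl hy.1.le hy.2.le
      · exact Filter.Eventually.of_forall fun t => sq_nonneg _
      · exact huy2int x 1 ⟨zero_le_one, le_rfl⟩
    calc u x y ^ 2 = (∫ t in (0:ℝ)..y, uy x t) ^ 2 := by rw [hftc x y hy']
    _ ≤ y * ∫ t in (0:ℝ)..y, uy x t ^ 2 := hcs
    _ ≤ y * ∫ t in (0:ℝ)..1, uy x t ^ 2 := mul_le_mul_of_nonneg_left hmono hy.1.le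
    _ = y * G x := by rw [hGeq]
  -- slice integrability
  have hslice_int : ∀ x : ℝ, Integrable (fun y => u x y ^ 2) ν := fun x =>
    (((hconu x).pow 2).integrableOn_Icc).mono_set Ioo_subset_Icc_self
  -- slice bound
  have hIooy : ∫ y in Ioo (0:ℝ) 1, y = 1/2 := by
    rw [← integral_Ioc_eq_integral_Ioo,
      ← intervalIntegral.integral_of_le (by norm_num : (0:ℝ) ≤ 1)]
    rw [integral_id]
    norm_num
  have hslice : ∀ x : ℝ, ∫ y, u x y ^ 2 ∂ν ≤ (1/2) * G x := by
    intro x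
    have hib : Integrable (fun y : ℝ => y * G x) ν :=
      ((continuous_id.mul continuous_const).integrableOn_Icc).mono_set Ioo_subset_Icc_self
    calc ∫ y, u x y ^ 2 ∂ν ≤ ∫ y, y * G x ∂ν := by
          refine setIntegral_mono_on (hslice_int x) hib measurableSet_Ioo ?_
          intro y hy; exact hpt x y hy
    _ = (∫ y in Ioo (0:ℝ) 1, y) * G x := by rw [← integral_mul_const]
    _ = (1/2) * G x := by rw [hIooy]
  -- integrability of uy^2 wrt product measure, and of G
  have hint' : Integrable (fun q : ℝ × ℝ => uy q.1 q.2 ^ 2) ((volume : Measure ℝ).prod ν) := by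
    rwa [IntegrableOn, hrestr] at hint
  have hGint : Integrable G volume := by
    have := hint'.integral_prod_left
    simpa [hG, hν] using this
  -- a.e. strong measurability of u^2 on the product
  have haesm : AEStronglyMeasurable (fun q : ℝ × ℝ => u q.1 q.2 ^ 2)
      ((volume : Measure ℝ).prod ν) := by
    rw [← hrestr]
    exact ((hu.mono (prod_mono_right Ioo_subset_Icc_self)).pow 2).aestronglyMeasurable
      (MeasurableSet.univ.prod measurableSet_Ioo)
  -- integrability of u^2 on the product
  have hintU : Integrable (fun q : ℝ × ℝ => u q.1 q.2 ^ 2) ((volume : Measure ℝ).prod ν) := by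
    rw [integrable_prod_iff haesm]
    refine ⟨Filter.Eventually.of_forall fun x => hslice_int x, ?_⟩
    have haesm2 : AEStronglyMeasurable (fun x => ∫ y, ‖u x y ^ 2‖ ∂ν) volume :=
      haesm.norm.integral_prod_right'
    refine Integrable.mono' (hGint.const_mul (1/2)) haesm2 ?_
    refine Filter.Eventually.of_forall fun x => ?_
    have h1 : ∫ y, ‖u x y ^ 2‖ ∂ν = ∫ y, u x y ^ 2 ∂ν := by
      congr 1; funext y; exact Real.norm_of_nonneg (sq_nonneg _)
    rw [Real.norm_of_nonneg (by rw [h1]; exact integral_nonneg fun y => sq_nonneg _), h1]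
    exact hslice x
  constructor
  · rwa [IntegrableOn, hrestr]
  · have hsetint : ∀ f : ℝ × ℝ → ℝ, (∫ q in (univ : Set ℝ) ×ˢ Ioo (0:ℝ) 1, f q)
        = ∫ q, f q ∂((volume : Measure ℝ).prod ν) := fun f => by rw [← hrestr]
    rw [hsetint (fun q => u q.1 q.2 ^ 2), hsetint (fun q => uy q.1 q.2 ^ 2),
      integral_prod _ hintU, integral_prod _ hint']
    calc ∫ x, ∫ y, u x y ^ 2 ∂ν ≤ ∫ x, (1/2) * G x :=
          integral_mono hintU.integral_prod_left (hGint.const_mul _) hslice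
    _ = (1/2) * ∫ x, G x := integral_const_mul _ _
    _ = (1/2) * ∫ x, ∫ y, uy x y ^ 2 ∂ν := rfl
end
end

section
/- Let g : ℝ × [0,1] → ℝ be continuous with continuous partial derivative ∂_y g, and suppose g and ∂_y g are square-integrable on S = ℝ × (0,1). Assume that for every x ∈ ℝ there exists y₀ = y₀(x) ∈ [0,1] with g(x, y₀) = 0 (this holds in particular if g(x,0) = 0 for all x, or if ∫₀¹ g(x,y) dy = 0 for all x). Then ∫_ℝ ( sup_{y ∈ [0,1]} |g(x,y)| )² dx ≤ 2 ‖g‖_{L²(S)} ‖∂_y g‖_{L²(S)}. -/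
noncomputable section

open MeasureTheory Set

/-- Cauchy–Schwarz inequality for integrals of nonnegative functions. -/
lemma cs_integral {α : Type*} [MeasurableSpace α] {μ : Measure α} {f h : α → ℝ}
    (hf0 : 0 ≤ᵐ[μ] f) (hh0 : 0 ≤ᵐ[μ] h)
    (hfm : AEStronglyMeasurable f μ) (hhm : AEStronglyMeasurable h μ)
    (hf2 : Integrable (fun a => f a ^ 2) μ) (hh2 : Integrable (fun a => h a ^ 2) μ) :
    ∫ a, f a * h a ∂μ ≤ Real.sqrt (∫ a, f a ^ 2 ∂μ) * Real.sqrt (∫ a, h a ^ 2 ∂μ) := by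
  have hpq : (2 : ℝ).HolderConjugate 2 := by
    constructor <;> norm_num
  have h2 : ENNReal.ofReal (2 : ℝ) = 2 := by simp
  have hfL : MemLp f (ENNReal.ofReal (2 : ℝ)) μ := by
    rw [h2]; exact (memLp_two_iff_integrable_sq hfm).2 hf2
  have hhL : MemLp h (ENNReal.ofReal (2 : ℝ)) μ := by
    rw [h2]; exact (memLp_two_iff_integrable_sq hhm).2 hh2
  have key := MeasureTheory.integral_mul_le_Lp_mul_Lq_of_nonneg hpq hf0 hh0 hfL hhL
  have hrw : ∀ u : α → ℝ, (∫ a, u a ^ (2:ℝ) ∂μ) = ∫ a, u a ^ 2 ∂μ := by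
    intro u
    refine integral_congr_ae (Filter.Eventually.of_forall fun a => ?_)
    norm_num
  rw [hrw f, hrw h] at key
  have hint_nonneg : ∀ u : α → ℝ, 0 ≤ ∫ a, u a ^ 2 ∂μ := fun u =>
    integral_nonneg fun a => sq_nonneg _
  rwa [Real.sqrt_eq_rpow, Real.sqrt_eq_rpow]

/-- Fiberwise Agmon inequality on `[0,1]`. -/
lemma fiber_bound (f f' : ℝ → ℝ)
    (hf'c : ContinuousOn f' (Icc (0:ℝ) 1))
    (hd : ∀ y ∈ Icc (0:ℝ) 1, HasDerivWithinAt f (f' y) (Icc (0:ℝ) 1) y)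
    (hz : ∃ y₀ ∈ Icc (0:ℝ) 1, f y₀ = 0) :
    (sSup ((fun y => |f y|) '' Icc (0:ℝ) 1)) ^ 2 ≤
      2 * Real.sqrt (∫ y in Ioo (0:ℝ) 1, f y ^ 2) *
        Real.sqrt (∫ y in Ioo (0:ℝ) 1, f' y ^ 2) := by
  have hfc : ContinuousOn f (Icc (0:ℝ) 1) := fun y hy =>
    (hd y hy).continuousWithinAt
  have habs : ContinuousOn (fun y => |f y|) (Icc (0:ℝ) 1) := hfc.abs
  obtain ⟨y₁, hy₁, hmax⟩ := (isCompact_Icc (a := (0:ℝ)) (b := 1)).exists_isMaxOn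
    (nonempty_Icc.2 zero_le_one) habs
  obtain ⟨y₀, hy₀, hfy₀⟩ := hz
  have hSup : sSup ((fun y => |f y|) '' Icc (0:ℝ) 1) = |f y₁| := by
    apply IsGreatest.csSup_eq
    exact ⟨mem_image_of_mem _ hy₁, fun v hv => by
      obtain ⟨y, hy, rfl⟩ := hv; exact hmax hy⟩
  rw [hSup, sq_abs]
  -- FTC on `[y₀, y₁]`
  have hsub : uIcc y₀ y₁ ⊆ Icc (0:ℝ) 1 := uIcc_subset_Icc hy₀ hy₁
  have hFc : ContinuousOn (fun y => f y ^ 2) (uIcc y₀ y₁) :=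
    (hfc.pow 2).mono hsub
  have hintF' : IntegrableOn (fun y => 2 * f y * f' y) (Icc (0:ℝ) 1) :=
    ((continuousOn_const.mul hfc).mul hf'c).integrableOn_Icc
  have hintI : IntervalIntegrable (fun y => 2 * f y * f' y) volume y₀ y₁ :=
    (hintF'.mono_set hsub).intervalIntegrable
  have hftc : (∫ y in y₀..y₁, 2 * f y * f' y) = f y₁ ^ 2 - f y₀ ^ 2 := by
    apply intervalIntegral.integral_eq_sub_of_hasDeriv_right hFc _ hintI
    intro x hx
    have hx01 : x ∈ Ioo (0:ℝ) 1 := by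
      rcases hy₀.1.lt_or_eq with h | h
      all_goals
        constructor
        · exact lt_of_le_of_lt (le_min hy₀.1 hy₁.1) hx.1
        · exact lt_of_lt_of_le hx.2 (max_le hy₀.2 hy₁.2)
    have hmem : Icc (0:ℝ) 1 ∈ nhds x := Icc_mem_nhds hx01.1 hx01.2
    have hx' : x ∈ Icc (0:ℝ) 1 := Ioo_subset_Icc_self hx01
    have hdx : HasDerivAt f (f' x) x := (hd x hx').hasDerivAt hmem
    have : HasDerivAt (fun y => f y ^ 2) (2 * f x * f' x) x := by
      have := hdx.fun_pow 2
      simpa [mul_comm, mul_assoc, mul_left_comm] using this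
    exact this.hasDerivWithinAt
  have hbound : f y₁ ^ 2 ≤ ∫ y in Icc (0:ℝ) 1, 2 * (|f y| * |f' y|) := by
    have h1 : f y₁ ^ 2 = f y₁ ^ 2 - f y₀ ^ 2 := by rw [hfy₀]; ring
    rw [h1, ← hftc]
    calc (∫ y in y₀..y₁, 2 * f y * f' y)
        ≤ |∫ y in y₀..y₁, 2 * f y * f' y| := le_abs_self _
      _ ≤ ∫ y in uIoc y₀ y₁, |2 * f y * f' y| := by
          simpa only [Real.norm_eq_abs] using
            intervalIntegral.norm_integral_le_integral_norm_uIoc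
              (f := fun y => 2 * f y * f' y) (a := y₀) (b := y₁) (μ := volume)
      _ ≤ ∫ y in Icc (0:ℝ) 1, |2 * f y * f' y| := by
          apply setIntegral_mono_set hintF'.abs
            (Filter.Eventually.of_forall fun y => abs_nonneg _)
            (HasSubset.Subset.eventuallyLE (uIoc_subset_uIcc.trans hsub))
      _ = ∫ y in Icc (0:ℝ) 1, 2 * (|f y| * |f' y|) := by
          refine setIntegral_congr_fun measurableSet_Icc fun y _ => ?_
          rw [abs_mul, abs_mul]
          simp [abs_of_nonneg, mul_assoc]
  refine hbound.trans ?_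
  have μ01 : (volume : Measure ℝ).restrict (Icc (0:ℝ) 1) = volume.restrict (Ioo 0 1) := by
    rw [restrict_Ioo_eq_restrict_Icc]
  have hfm : AEStronglyMeasurable (fun y => |f y|) (volume.restrict (Icc (0:ℝ) 1)) :=
    (hfc.abs.aestronglyMeasurable measurableSet_Icc)
  have hf'm : AEStronglyMeasurable (fun y => |f' y|) (volume.restrict (Icc (0:ℝ) 1)) :=
    (hf'c.abs.aestronglyMeasurable measurableSet_Icc)
  have hf2 : Integrable (fun y => |f y| ^ 2) (volume.restrict (Icc (0:ℝ) 1)) := by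
    simpa [sq_abs, IntegrableOn] using ((hfc.fun_pow 2).integrableOn_Icc : IntegrableOn (fun y => f y ^ 2) _ _)
  have hf'2 : Integrable (fun y => |f' y| ^ 2) (volume.restrict (Icc (0:ℝ) 1)) := by
    simpa [sq_abs, IntegrableOn] using ((hf'c.fun_pow 2).integrableOn_Icc : IntegrableOn (fun y => f' y ^ 2) _ _)
  have hcs := cs_integral (μ := volume.restrict (Icc (0:ℝ) 1))
    (Filter.Eventually.of_forall fun y => abs_nonneg (f y))
    (Filter.Eventually.of_forall fun y => abs_nonneg (f' y)) hfm hf'm hf2 hf'2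
  calc (∫ y in Icc (0:ℝ) 1, 2 * (|f y| * |f' y|))
      = 2 * ∫ y in Icc (0:ℝ) 1, |f y| * |f' y| := by rw [integral_const_mul]
    _ ≤ 2 * (Real.sqrt (∫ y in Icc (0:ℝ) 1, |f y| ^ 2) *
          Real.sqrt (∫ y in Icc (0:ℝ) 1, |f' y| ^ 2)) := by linarith
    _ = 2 * Real.sqrt (∫ y in Ioo (0:ℝ) 1, f y ^ 2) *
          Real.sqrt (∫ y in Ioo (0:ℝ) 1, f' y ^ 2) := by
        simp only [sq_abs, μ01]; ring

/-- The Agmon-type interpolation inequality on the strip: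
`∫_ℝ (sup_{y∈[0,1]} |g(x,y)|)² dx ≤ 2 ‖g‖_{L²(S)} ‖∂_y g‖_{L²(S)}`, valid for `g`
vanishing at some point of each vertical fiber. -/
theorem agmon_vertical (g gy : ℝ → ℝ → ℝ)
    (hg : ContinuousOn (fun q : ℝ × ℝ => g q.1 q.2) ((univ : Set ℝ) ×ˢ Icc (0:ℝ) 1))
    (hgy : ContinuousOn (fun q : ℝ × ℝ => gy q.1 q.2) ((univ : Set ℝ) ×ˢ Icc (0:ℝ) 1))
    (hderiv : ∀ x : ℝ, ∀ y ∈ Icc (0:ℝ) 1,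
      HasDerivWithinAt (g x) (gy x y) (Icc (0:ℝ) 1) y)
    (hintg : IntegrableOn (fun q : ℝ × ℝ => g q.1 q.2 ^ 2)
      ((univ : Set ℝ) ×ˢ Ioo (0:ℝ) 1))
    (hintgy : IntegrableOn (fun q : ℝ × ℝ => gy q.1 q.2 ^ 2)
      ((univ : Set ℝ) ×ˢ Ioo (0:ℝ) 1))
    (hzero : ∀ x : ℝ, ∃ y₀ ∈ Icc (0:ℝ) 1, g x y₀ = 0) :
    (∫ x : ℝ, (sSup ((fun y => |g x y|) '' Icc (0:ℝ) 1)) ^ 2) ≤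
      2 * Real.sqrt (∫ q in (univ : Set ℝ) ×ˢ Ioo (0:ℝ) 1, g q.1 q.2 ^ 2) *
        Real.sqrt (∫ q in (univ : Set ℝ) ×ˢ Ioo (0:ℝ) 1, gy q.1 q.2 ^ 2) := by
  -- switch between set-integral on the product and the partially-restricted product measure
  have hmeas_eq : (volume : Measure (ℝ × ℝ)).restrict ((univ : Set ℝ) ×ˢ Ioo (0:ℝ) 1)
      = (volume : Measure ℝ).prod ((volume : Measure ℝ).restrict (Ioo (0:ℝ) 1)) := by
    rw [Measure.volume_eq_prod, ← Measure.prod_restrict, Measure.restrict_univ]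
  have h1 : Integrable (fun q : ℝ × ℝ => g q.1 q.2 ^ 2)
      ((volume : Measure ℝ).prod ((volume : Measure ℝ).restrict (Ioo (0:ℝ) 1))) := by
    rw [← hmeas_eq]; exact hintg
  have h2 : Integrable (fun q : ℝ × ℝ => gy q.1 q.2 ^ 2)
      ((volume : Measure ℝ).prod ((volume : Measure ℝ).restrict (Ioo (0:ℝ) 1))) := by
    rw [← hmeas_eq]; exact hintgy
  set F : ℝ → ℝ := fun x => ∫ y in Ioo (0:ℝ) 1, g x y ^ 2 with hF
  set G : ℝ → ℝ := fun x => ∫ y in Ioo (0:ℝ) 1, gy x y ^ 2 with hG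
  have hFint : Integrable F := h1.integral_prod_left
  have hGint : Integrable G := h2.integral_prod_left
  have hF0 : ∀ x, 0 ≤ F x := fun x => integral_nonneg fun y => sq_nonneg _
  have hG0 : ∀ x, 0 ≤ G x := fun x => integral_nonneg fun y => sq_nonneg _
  set A : ℝ → ℝ := fun x => Real.sqrt (F x) with hA
  set B : ℝ → ℝ := fun x => Real.sqrt (G x) with hB
  -- pointwise fiber bound
  have hpt : ∀ x : ℝ, (sSup ((fun y => |g x y|) '' Icc (0:ℝ) 1)) ^ 2 ≤ 2 * (A x * B x) := by
    intro x
    have hf'c : ContinuousOn (gy x) (Icc (0:ℝ) 1) := by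
      have : ContinuousOn (fun y : ℝ => (x, y)) (Icc (0:ℝ) 1) :=
        (continuous_const.prodMk continuous_id).continuousOn
      exact hgy.comp this fun y hy => ⟨mem_univ _, hy⟩
    have := fiber_bound (g x) (gy x) hf'c (hderiv x) (hzero x)
    calc (sSup ((fun y => |g x y|) '' Icc (0:ℝ) 1)) ^ 2
        ≤ 2 * Real.sqrt (∫ y in Ioo (0:ℝ) 1, g x y ^ 2) *
            Real.sqrt (∫ y in Ioo (0:ℝ) 1, gy x y ^ 2) := this
      _ = 2 * (A x * B x) := by rw [hA, hB, hF, hG]; ring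
  -- measurability of A, B
  have hAm : AEStronglyMeasurable A volume :=
    Real.continuous_sqrt.comp_aestronglyMeasurable hFint.aestronglyMeasurable
  have hBm : AEStronglyMeasurable B volume :=
    Real.continuous_sqrt.comp_aestronglyMeasurable hGint.aestronglyMeasurable
  -- A * B is integrable, being dominated by (F + G)/2
  have hABle : ∀ x, A x * B x ≤ (F x + G x) / 2 := by
    intro x
    nlinarith [sq_nonneg (A x - B x), Real.sq_sqrt (hF0 x), Real.sq_sqrt (hG0 x),
      Real.sqrt_nonneg (F x), Real.sqrt_nonneg (G x)]
  have hABint : Integrable (fun x => A x * B x) := by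
    refine Integrable.mono' ((hFint.add hGint).div_const 2) (hAm.mul hBm)
      (Filter.Eventually.of_forall fun x => ?_)
    rw [Real.norm_eq_abs, abs_of_nonneg (mul_nonneg (Real.sqrt_nonneg _) (Real.sqrt_nonneg _))]
    exact hABle x
  -- main chain
  have hA2 : Integrable (fun x => A x ^ 2) := by
    refine hFint.congr (Filter.Eventually.of_forall fun x => ?_)
    exact (Real.sq_sqrt (hF0 x)).symm
  have hB2 : Integrable (fun x => B x ^ 2) := by
    refine hGint.congr (Filter.Eventually.of_forall fun x => ?_)
    exact (Real.sq_sqrt (hG0 x)).symm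
  have hcs := cs_integral (μ := (volume : Measure ℝ))
    (Filter.Eventually.of_forall fun x => Real.sqrt_nonneg (F x))
    (Filter.Eventually.of_forall fun x => Real.sqrt_nonneg (G x)) hAm hBm hA2 hB2
  have hint_eqF : (∫ x, A x ^ 2) = ∫ q in (univ : Set ℝ) ×ˢ Ioo (0:ℝ) 1, g q.1 q.2 ^ 2 := by
    have : (∫ x, A x ^ 2) = ∫ x, F x := by
      exact integral_congr_ae (Filter.Eventually.of_forall fun x => Real.sq_sqrt (hF0 x))
    rw [this, hmeas_eq]
    exact MeasureTheory.integral_integral (μ := (volume : Measure ℝ))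
      (ν := (volume : Measure ℝ).restrict (Ioo (0:ℝ) 1)) (f := fun x y => g x y ^ 2) h1
  have hint_eqG : (∫ x, B x ^ 2) = ∫ q in (univ : Set ℝ) ×ˢ Ioo (0:ℝ) 1, gy q.1 q.2 ^ 2 := by
    have : (∫ x, B x ^ 2) = ∫ x, G x := by
      exact integral_congr_ae (Filter.Eventually.of_forall fun x => Real.sq_sqrt (hG0 x))
    rw [this, hmeas_eq]
    exact MeasureTheory.integral_integral (μ := (volume : Measure ℝ))
      (ν := (volume : Measure ℝ).restrict (Ioo (0:ℝ) 1)) (f := fun x y => gy x y ^ 2) h2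
  calc (∫ x : ℝ, (sSup ((fun y => |g x y|) '' Icc (0:ℝ) 1)) ^ 2)
      ≤ ∫ x : ℝ, 2 * (A x * B x) := by
        refine integral_mono_of_nonneg (Filter.Eventually.of_forall fun x => sq_nonneg _)
          (hABint.const_mul 2) (Filter.Eventually.of_forall hpt)
    _ = 2 * ∫ x : ℝ, A x * B x := integral_const_mul 2 _
    _ ≤ 2 * (Real.sqrt (∫ x, A x ^ 2) * Real.sqrt (∫ x, B x ^ 2)) := by linarith
    _ = 2 * Real.sqrt (∫ q in (univ : Set ℝ) ×ˢ Ioo (0:ℝ) 1, g q.1 q.2 ^ 2) *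
          Real.sqrt (∫ q in (univ : Set ℝ) ×ˢ Ioo (0:ℝ) 1, gy q.1 q.2 ^ 2) := by
        rw [hint_eqF, hint_eqG]; ring
end
end

section
/- There is a universal constant C > 0 (depending only on the annulus {3/4 ≤ |τ| ≤ 8/3}) such that the following holds. Let k ∈ ℤ and let g : ℝ × [0,1] → ℝ be continuous with continuous partial derivative ∂_y g, with g(x,0) = 0 for every x, g(·,y) integrable and square-integrable for each y, g and ∂_y g square-integrable on S = ℝ × (0,1), and suppose that for each y ∈ [0,1] the partial Fourier transform ĝ(ξ,y) in x vanishes for all ξ with |ξ| outside [ (3/4)·2^k, (8/3)·2^k ]. Then sup_{(x,y) ∈ ℝ×[0,1]} |g(x,y)| ≤ C 2^{k/2} ‖g‖_{L²(S)}^{1/2} ‖∂_y g‖_{L²(S)}^{1/2} ≤ C 2^{k/2} ‖∂_y g‖_{L²(S)}. -/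
noncomputable section

open MeasureTheory Set
open Real Complex FourierTransform RealInnerProductSpace
open scoped ENNReal


lemma my_cs {α : Type*} [MeasurableSpace α] (μ : Measure α) (f g : α → ℝ)
    (hfm : AEStronglyMeasurable f μ) (hgm : AEStronglyMeasurable g μ)
    (hf : Integrable (fun a => f a ^ 2) μ) (hg : Integrable (fun a => g a ^ 2) μ) :
    ∫ a, |f a| * |g a| ∂μ ≤ Real.sqrt (∫ a, f a ^ 2 ∂μ) * Real.sqrt (∫ a, g a ^ 2 ∂μ) := by
  have hpq : Real.HolderConjugate 2 2 := by rw [Real.holderConjugate_iff]; norm_num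
  have hf2 : MemLp (fun a => |f a|) (ENNReal.ofReal 2) μ := by
    rw [show ENNReal.ofReal 2 = (2:ℝ≥0∞) by norm_num]
    rw [memLp_two_iff_integrable_sq (by simpa [Real.norm_eq_abs] using hfm.norm : AEStronglyMeasurable (fun a => |f a|) μ)]
    simpa [sq_abs] using hf
  have hg2 : MemLp (fun a => |g a|) (ENNReal.ofReal 2) μ := by
    rw [show ENNReal.ofReal 2 = (2:ℝ≥0∞) by norm_num]
    rw [memLp_two_iff_integrable_sq (by simpa [Real.norm_eq_abs] using hgm.norm : AEStronglyMeasurable (fun a => |g a|) μ)]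
    simpa [sq_abs] using hg
  have := integral_mul_le_Lp_mul_Lq_of_nonneg hpq
    (Filter.Eventually.of_forall (fun a => abs_nonneg (f a)))
    (Filter.Eventually.of_forall (fun a => abs_nonneg (g a))) hf2 hg2
  calc ∫ a, |f a| * |g a| ∂μ
      ≤ (∫ a, |f a| ^ (2:ℝ) ∂μ) ^ (1/(2:ℝ)) * (∫ a, |g a| ^ (2:ℝ) ∂μ) ^ (1/(2:ℝ)) := this
    _ = Real.sqrt (∫ a, f a ^ 2 ∂μ) * Real.sqrt (∫ a, g a ^ 2 ∂μ) := by
        rw [Real.sqrt_eq_rpow, Real.sqrt_eq_rpow]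
        congr 2 <;> · apply integral_congr_ae; filter_upwards with a
                      rw [show ((2:ℝ)) = ((2:ℕ):ℝ) by norm_num, Real.rpow_natCast, _root_.sq_abs]

lemma integrable_conj' {f : ℝ → ℂ} (hf : Integrable f) :
    Integrable (fun x => (starRingEnd ℂ) (f x)) :=
  (Complex.conjCLE.toContinuousLinearMap).integrable_comp hf

lemma my_plancherel {h : ℝ → ℝ} (hc : Continuous h) (h1 : Integrable h)
    (hF : Integrable (𝓕 (fun x => (h x : ℂ)))) :
    ∫ ξ, ‖𝓕 (fun x => (h x : ℂ)) ξ‖ ^ 2 = ∫ x, h x ^ 2 := by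
  set hℂ : ℝ → ℂ := fun x => (h x : ℂ) with hℂdef
  set H : ℝ → ℂ := 𝓕 hℂ with Hdef
  have hℂc : Continuous hℂ := Complex.continuous_ofReal.comp hc
  have h1ℂ : Integrable hℂ := h1.ofReal
  have hinv : 𝓕⁻ H = hℂ := hℂc.fourierInv_fourier_eq h1ℂ hF
  have hconj : Integrable (fun ξ => (starRingEnd ℂ) (H ξ)) := integrable_conj' hF
  have hLcont : Continuous fun p : ℝ × ℝ => (innerₗ ℝ) p.1 p.2 := continuous_inner
  have key := VectorFourier.integral_fourierIntegral_smul_eq_flip (e := 𝐞)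
    (L := innerₗ ℝ) Real.continuous_fourierChar hLcont h1ℂ hconj
  have hflip : (innerₗ ℝ).flip = innerₗ ℝ := by
    apply LinearMap.ext; intro x; apply LinearMap.ext; intro y
    exact real_inner_comm x y
  rw [hflip] at key
  have keq : ∀ f : ℝ → ℂ, VectorFourier.fourierIntegral 𝐞 volume (innerₗ ℝ) f = 𝓕 f :=
    fun f => rfl
  simp only [keq] at key
  have conj_step : ∀ x : ℝ, 𝓕 (fun ξ => (starRingEnd ℂ) (H ξ)) x
      = (starRingEnd ℂ) ((𝓕⁻ H) x) := by
    intro x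
    rw [Real.fourier_eq, Real.fourierInv_eq, ← integral_conj]
    congr 1; funext v
    have : ∀ (t : ℝ) (z : ℂ), (starRingEnd ℂ) ((𝐞 t : Circle) • z)
        = (𝐞 (-t) : Circle) • (starRingEnd ℂ) z := by
      intro t z
      simp only [Circle.smul_def, map_mul, Real.fourierChar_apply, ← Complex.exp_conj,
        Complex.conj_I, Complex.conj_ofReal, smul_eq_mul]
      congr 2
      push_cast
      ring
    rw [this]
  simp only [conj_step, hinv] at key
  have lhs : ∫ ξ, (H ξ) • (starRingEnd ℂ) (H ξ) = ((∫ ξ, ‖H ξ‖ ^ 2 : ℝ) : ℂ) := by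
    have e1 : ∀ ξ : ℝ, (H ξ) • (starRingEnd ℂ) (H ξ) = ((‖H ξ‖ ^ 2 : ℝ) : ℂ) := by
      intro ξ
      rw [smul_eq_mul, Complex.mul_conj]
      norm_cast
      rw [Complex.normSq_eq_norm_sq]
    calc ∫ ξ, (H ξ) • (starRingEnd ℂ) (H ξ) = ∫ ξ : ℝ, ((‖H ξ‖ ^ 2 : ℝ) : ℂ) := by
          simp only [e1]
      _ = ((∫ ξ, ‖H ξ‖ ^ 2 : ℝ) : ℂ) := integral_ofReal
  have rhs : ∫ x, (hℂ x) • (starRingEnd ℂ) (hℂ x) = ((∫ x, h x ^ 2 : ℝ) : ℂ) := by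
    have e1 : ∀ x : ℝ, (hℂ x) • (starRingEnd ℂ) (hℂ x) = ((h x ^ 2 : ℝ) : ℂ) := by
      intro x
      rw [smul_eq_mul, hℂdef]
      simp only [Complex.conj_ofReal]
      norm_cast
      ring
    calc ∫ x, (hℂ x) • (starRingEnd ℂ) (hℂ x) = ∫ x : ℝ, ((h x ^ 2 : ℝ) : ℂ) := by
          simp only [e1]
      _ = ((∫ x, h x ^ 2 : ℝ) : ℂ) := integral_ofReal
  rw [lhs, rhs] at key
  exact_mod_cast key

lemma my_bernstein (k : ℤ) (h : ℝ → ℝ) (hc : Continuous h) (h1 : Integrable h)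
    (h2 : Integrable (fun x => h x ^ 2))
    (hsupp : ∀ ξ : ℝ, ¬(3/4 * (2:ℝ)^k ≤ |ξ| ∧ |ξ| ≤ 8/3 * (2:ℝ)^k) →
      𝓕 (fun x => (h x : ℂ)) ξ = 0) :
    ∀ x, |h x| ≤ 3 * (2:ℝ) ^ ((k:ℝ)/2) * Real.sqrt (∫ x, h x ^ 2) := by
  intro x
  set hℂ : ℝ → ℂ := fun x => (h x : ℂ) with hℂdef
  set H : ℝ → ℂ := 𝓕 hℂ with Hdef
  set R : ℝ := 8/3 * (2:ℝ)^k with Rdef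
  have hR : 0 < R := by positivity
  have hℂc : Continuous hℂ := Complex.continuous_ofReal.comp hc
  have h1ℂ : Integrable hℂ := h1.ofReal
  have hLcont : Continuous fun p : ℝ × ℝ => (innerₗ ℝ) p.1 p.2 := continuous_inner
  have Hcont : Continuous H :=
    VectorFourier.fourierIntegral_continuous Real.continuous_fourierChar hLcont h1ℂ
  have hcs : HasCompactSupport H := by
    apply HasCompactSupport.intro (isCompact_Icc (a := -R) (b := R))
    intro ξ hξ
    apply hsupp
    rintro ⟨-, hle⟩
    exact hξ (abs_le.mp hle)
  have HF : Integrable H := Hcont.integrable_of_hasCompactSupport hcs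
  have hinv : 𝓕⁻ H = hℂ := hℂc.fourierInv_fourier_eq h1ℂ HF
  have planch : ∫ ξ, ‖H ξ‖ ^ 2 = ∫ x, h x ^ 2 := my_plancherel hc h1 HF
  -- bound |h x| by ∫ ‖H‖
  have step1 : |h x| ≤ ∫ ξ, ‖H ξ‖ := by
    have e0 : ‖hℂ x‖ ≤ ∫ ξ, ‖H ξ‖ := by
      rw [← hinv]
      exact VectorFourier.norm_fourierIntegral_le_integral_norm 𝐞 volume (-innerₗ ℝ) H x
    simpa [hℂdef] using e0
  -- restrict to the annulus
  set s : Set ℝ := {ξ : ℝ | 3/4 * (2:ℝ)^k ≤ |ξ| ∧ |ξ| ≤ R} with sdef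
  have smeas : MeasurableSet s := by
    have : s = (fun ξ : ℝ => |ξ|) ⁻¹' (Icc (3/4 * (2:ℝ)^k) R) := rfl
    rw [this]
    exact (_root_.continuous_abs.measurable) measurableSet_Icc
  have hvanish : ∀ ξ ∉ s, ‖H ξ‖ = 0 := by
    intro ξ hξ
    rw [hsupp ξ hξ, norm_zero]
  have ssub : s ⊆ Icc (-R) R := fun ξ hξ => abs_le.mp hξ.2
  have svol : volume s ≤ ENNReal.ofReal (2 * R) := by
    calc volume s ≤ volume (Icc (-R) R) := measure_mono ssub
      _ = ENNReal.ofReal (2 * R) := by rw [Real.volume_Icc]; ring_nf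
  have svol_fin : volume s < ⊤ := lt_of_le_of_lt svol ENNReal.ofReal_lt_top
  have step2 : ∫ ξ, ‖H ξ‖ = ∫ ξ in s, ‖H ξ‖ := by
    rw [← setIntegral_eq_integral_of_forall_compl_eq_zero hvanish]
  -- Integrability of ‖H‖^2
  have HFnormsq : Integrable (fun ξ => ‖H ξ‖ ^ 2) := by
    set M : ℝ := ∫ v, ‖hℂ v‖ with Mdef
    have hM : ∀ ξ, ‖H ξ‖ ≤ M :=
      fun ξ => VectorFourier.norm_fourierIntegral_le_integral_norm _ _ _ _ _
    apply Integrable.mono (HF.norm.const_mul M) ((Hcont.norm.pow 2).aestronglyMeasurable)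
    filter_upwards with ξ
    rw [Real.norm_eq_abs, Real.norm_eq_abs, Pi.pow_apply,
      _root_.abs_of_nonneg (pow_nonneg (norm_nonneg (H ξ)) 2), pow_two]
    have h0 : (0:ℝ) ≤ ‖H ξ‖ := norm_nonneg _
    calc ‖H ξ‖ * ‖H ξ‖ ≤ M * ‖H ξ‖ := by
          apply mul_le_mul_of_nonneg_right (hM ξ) h0
      _ ≤ |M * ‖H ξ‖| := le_abs_self _
  -- Cauchy-Schwarz on s
  have step3 : ∫ ξ in s, ‖H ξ‖ ≤ Real.sqrt (2 * R) * Real.sqrt (∫ x, h x ^ 2) := by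
    have cs := my_cs (volume.restrict s) (fun ξ => ‖H ξ‖) (fun _ => (1:ℝ))
      (Hcont.norm.aestronglyMeasurable.restrict) aestronglyMeasurable_const
      (HFnormsq.restrict (s := s))
      (by
        have h1s : IntegrableOn (fun _ : ℝ => (1:ℝ)^2) s volume :=
          integrableOn_const (ne_of_lt svol_fin)
        exact h1s)
    have e1 : ∫ ξ in s, ‖H ξ‖ = ∫ ξ in s, |‖H ξ‖| * |(1:ℝ)| := by
      simp
    rw [e1]
    have e2 : ∫ ξ in s, (1:ℝ) ^ 2 = (volume s).toReal := by simp; rfl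
    calc ∫ ξ in s, |‖H ξ‖| * |(1:ℝ)|
        ≤ Real.sqrt (∫ ξ in s, ‖H ξ‖ ^ 2) * Real.sqrt (∫ ξ in s, (1:ℝ) ^ 2) := cs
      _ ≤ Real.sqrt (∫ ξ, ‖H ξ‖ ^ 2) * Real.sqrt (2 * R) := by
          apply mul_le_mul
          · apply Real.sqrt_le_sqrt
            apply setIntegral_le_integral HFnormsq
            filter_upwards with ξ using by positivity
          · rw [e2]
            apply Real.sqrt_le_sqrt
            exact ENNReal.toReal_le_of_le_ofReal (by positivity) svol
          · exact Real.sqrt_nonneg _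
          · exact Real.sqrt_nonneg _
      _ = Real.sqrt (2 * R) * Real.sqrt (∫ x, h x ^ 2) := by rw [planch, mul_comm]
  -- put it together
  have pow_eq : Real.sqrt (2 * R) ≤ 3 * (2:ℝ) ^ ((k:ℝ)/2) := by
    have h2k : ((2:ℝ)^k : ℝ) = (2:ℝ) ^ ((k:ℝ)) := by
      rw [← Real.rpow_intCast]
    have : (2 * R) = 16/3 * (2:ℝ) ^ ((k:ℝ)) := by rw [Rdef, ← h2k]; ring
    rw [this, Real.sqrt_mul (by norm_num)]
    have e3 : Real.sqrt ((2:ℝ) ^ ((k:ℝ))) = (2:ℝ) ^ ((k:ℝ)/2) := by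
      rw [Real.sqrt_eq_rpow, ← Real.rpow_mul (by norm_num : (0:ℝ) ≤ 2)]
      congr 1
      ring
    rw [e3]
    apply mul_le_mul_of_nonneg_right _ (by positivity)
    calc Real.sqrt (16/3) ≤ Real.sqrt 9 := Real.sqrt_le_sqrt (by norm_num)
      _ = 3 := by
          rw [show (9:ℝ) = 3^2 by norm_num, Real.sqrt_sq (by norm_num : (0:ℝ) ≤ 3)]
  calc |h x| ≤ ∫ ξ, ‖H ξ‖ := step1
    _ = ∫ ξ in s, ‖H ξ‖ := step2
    _ ≤ Real.sqrt (2 * R) * Real.sqrt (∫ x, h x ^ 2) := step3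
    _ ≤ 3 * (2:ℝ) ^ ((k:ℝ)/2) * Real.sqrt (∫ x, h x ^ 2) :=
        mul_le_mul_of_nonneg_right pow_eq (Real.sqrt_nonneg _)
/-- Bernstein–Agmon bound for a horizontally spectrally localized
function vanishing at `y = 0`:
`sup |g| ≤ C 2^{k/2} ‖g‖_{L²(S)}^{1/2} ‖∂_y g‖_{L²(S)}^{1/2} ≤ C 2^{k/2} ‖∂_y g‖_{L²(S)}`. -/
theorem bernstein_agmon :
    ∃ C : ℝ, 0 < C ∧
      ∀ (k : ℤ) (g gy : ℝ → ℝ → ℝ),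
        ContinuousOn (fun q : ℝ × ℝ => g q.1 q.2) ((univ : Set ℝ) ×ˢ Icc (0:ℝ) 1) →
        ContinuousOn (fun q : ℝ × ℝ => gy q.1 q.2) ((univ : Set ℝ) ×ˢ Icc (0:ℝ) 1) →
        (∀ x : ℝ, ∀ y ∈ Icc (0:ℝ) 1,
          HasDerivWithinAt (g x) (gy x y) (Icc (0:ℝ) 1) y) →
        (∀ x : ℝ, g x 0 = 0) →
        (∀ y ∈ Icc (0:ℝ) 1, Integrable (fun x => g x y)) →
        (∀ y ∈ Icc (0:ℝ) 1, Integrable (fun x => g x y ^ 2)) →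
        IntegrableOn (fun q : ℝ × ℝ => g q.1 q.2 ^ 2) ((univ : Set ℝ) ×ˢ Ioo (0:ℝ) 1) →
        IntegrableOn (fun q : ℝ × ℝ => gy q.1 q.2 ^ 2) ((univ : Set ℝ) ×ˢ Ioo (0:ℝ) 1) →
        (∀ y ∈ Icc (0:ℝ) 1, ∀ ξ : ℝ,
          ¬ (3/4 * (2:ℝ) ^ k ≤ |ξ| ∧ |ξ| ≤ 8/3 * (2:ℝ) ^ k) →
          (∫ x : ℝ, Complex.exp ((((-2) * Real.pi * x * ξ : ℝ) : ℂ) * Complex.I) *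
            (g x y : ℂ)) = 0) →
        (∀ x : ℝ, ∀ y ∈ Icc (0:ℝ) 1,
          |g x y| ≤ C * (2:ℝ) ^ ((k : ℝ) / 2) *
            Real.sqrt (Real.sqrt (∫ q in (univ : Set ℝ) ×ˢ Ioo (0:ℝ) 1, g q.1 q.2 ^ 2)) *
            Real.sqrt (Real.sqrt (∫ q in (univ : Set ℝ) ×ˢ Ioo (0:ℝ) 1, gy q.1 q.2 ^ 2))) ∧
        C * (2:ℝ) ^ ((k : ℝ) / 2) *
            Real.sqrt (Real.sqrt (∫ q in (univ : Set ℝ) ×ˢ Ioo (0:ℝ) 1, g q.1 q.2 ^ 2)) *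
            Real.sqrt (Real.sqrt (∫ q in (univ : Set ℝ) ×ˢ Ioo (0:ℝ) 1, gy q.1 q.2 ^ 2)) ≤
          C * (2:ℝ) ^ ((k : ℝ) / 2) *
            Real.sqrt (∫ q in (univ : Set ℝ) ×ˢ Ioo (0:ℝ) 1, gy q.1 q.2 ^ 2) := by
  refine ⟨5, by norm_num, ?_⟩
  intro k g gy hgc hgyc hderiv h0 hL1 hL2 hA hB hFT
  set Q : Set (ℝ × ℝ) := (univ : Set ℝ) ×ˢ Ioo (0:ℝ) 1 with Qdef
  set ν : Measure ℝ := volume.restrict (Ioo (0:ℝ) 1) with νdef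
  have measQ : MeasurableSet Q := MeasurableSet.univ.prod measurableSet_Ioo
  have hQr : (volume : Measure (ℝ × ℝ)).restrict Q = (volume : Measure ℝ).prod ν := by
    rw [Qdef, νdef, Measure.volume_eq_prod, ← Measure.prod_restrict, Measure.restrict_univ]
  set A : ℝ := ∫ q in Q, g q.1 q.2 ^ 2 with Adef
  set B : ℝ := ∫ q in Q, gy q.1 q.2 ^ 2 with Bdef
  have hAnn : 0 ≤ A := setIntegral_nonneg measQ fun q _ => sq_nonneg _
  have hBnn : 0 ≤ B := setIntegral_nonneg measQ fun q _ => sq_nonneg _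
  have hA' : Integrable (fun q : ℝ × ℝ => g q.1 q.2 ^ 2) ((volume : Measure ℝ).prod ν) := by
    rw [← hQr]; exact hA
  have hB' : Integrable (fun q : ℝ × ℝ => gy q.1 q.2 ^ 2) ((volume : Measure ℝ).prod ν) := by
    rw [← hQr]; exact hB
  -- continuity of sections
  have cgx : ∀ x : ℝ, ContinuousOn (fun t => g x t) (Icc (0:ℝ) 1) := by
    intro x
    exact hgc.comp ((Continuous.prodMk_right x).continuousOn) (fun t ht => ⟨mem_univ x, ht⟩)
  have cgyx : ∀ x : ℝ, ContinuousOn (fun t => gy x t) (Icc (0:ℝ) 1) := by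
    intro x
    exact hgyc.comp ((Continuous.prodMk_right x).continuousOn) (fun t ht => ⟨mem_univ x, ht⟩)
  have cgy : ∀ y ∈ Icc (0:ℝ) 1, Continuous (fun x => g x y) := by
    intro y hy
    rw [← continuousOn_univ]
    exact hgc.comp ((continuous_id.prodMk continuous_const).continuousOn)
      (fun x _ => ⟨mem_univ x, hy⟩)
  -- FTC facts
  have ftc0 : ∀ x : ℝ, ∀ y ∈ Icc (0:ℝ) 1, g x y = ∫ t in (0:ℝ)..y, gy x t := by
    intro x y hy
    have := intervalIntegral.integral_eq_sub_of_hasDeriv_right_of_le hy.1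
      ((cgx x).mono (Icc_subset_Icc le_rfl hy.2))
      (fun t ht => ((hderiv x t ⟨le_of_lt ht.1, le_of_lt (lt_of_lt_of_le ht.2 hy.2)⟩).hasDerivAt
        (Icc_mem_nhds ht.1 (lt_of_lt_of_le ht.2 hy.2))).hasDerivWithinAt)
      (((cgyx x).mono (Icc_subset_Icc le_rfl hy.2)).intervalIntegrable_of_Icc hy.1)
    rw [this, h0 x, sub_zero]
  have ftc1 : ∀ x : ℝ, ∀ y ∈ Icc (0:ℝ) 1,
      g x y ^ 2 = ∫ t in (0:ℝ)..y, 2 * g x t * gy x t := by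
    intro x y hy
    have hderiv2 : ∀ t ∈ Ioo (0:ℝ) y, HasDerivAt (fun t => g x t ^ 2)
        (2 * g x t * gy x t) t := by
      intro t ht
      have ht1 : t ∈ Icc (0:ℝ) 1 := ⟨le_of_lt ht.1, le_of_lt (lt_of_lt_of_le ht.2 hy.2)⟩
      have h1 := (hderiv x t ht1).hasDerivAt (Icc_mem_nhds ht.1 (lt_of_lt_of_le ht.2 hy.2))
      have := h1.fun_pow 2
      simpa [mul_comm, mul_assoc, mul_left_comm] using this
    have := intervalIntegral.integral_eq_sub_of_hasDeriv_right_of_le hy.1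
      (((cgx x).mono (Icc_subset_Icc le_rfl hy.2)).pow 2)
      (fun t ht => (hderiv2 t ht).hasDerivWithinAt)
      (by
        apply ContinuousOn.intervalIntegrable_of_Icc hy.1
        exact (continuousOn_const.mul ((cgx x).mono (Icc_subset_Icc le_rfl hy.2))).mul
          ((cgyx x).mono (Icc_subset_Icc le_rfl hy.2)))
    rw [this]; simp only [Pi.pow_apply, h0 x]
    norm_num
  -- integrability of sections in t
  have gyIntIcc : ∀ x : ℝ, IntegrableOn (fun t => gy x t ^ 2) (Icc (0:ℝ) 1) volume :=
    fun x => ((cgyx x).pow 2).integrableOn_compact isCompact_Icc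
  have gIntIcc : ∀ x : ℝ, IntegrableOn (fun t => g x t ^ 2) (Icc (0:ℝ) 1) volume :=
    fun x => ((cgx x).pow 2).integrableOn_compact isCompact_Icc
  -- pointwise Poincare
  have poinc_pt : ∀ x : ℝ, ∀ y ∈ Icc (0:ℝ) 1,
      g x y ^ 2 ≤ ∫ t in Ioo (0:ℝ) 1, gy x t ^ 2 := by
    intro x y hy
    set I2 : ℝ := ∫ t in Ioo (0:ℝ) 1, gy x t ^ 2 with I2def
    have hI2nn : 0 ≤ I2 := setIntegral_nonneg measurableSet_Ioo fun t _ => sq_nonneg _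
    have hIoc : ∫ t in Ioc (0:ℝ) 1, gy x t ^ 2 = I2 := integral_Ioc_eq_integral_Ioo
    have habs : |g x y| ≤ Real.sqrt I2 := by
      rw [ftc0 x y hy, intervalIntegral.integral_of_le hy.1]
      have h1 : |∫ t in Ioc (0:ℝ) y, gy x t| ≤ ∫ t in Ioc (0:ℝ) y, |gy x t| := by
        simpa [Real.norm_eq_abs] using
          norm_integral_le_integral_norm (μ := volume.restrict (Ioc (0:ℝ) y)) (fun t => gy x t)
      have h2 : ∫ t in Ioc (0:ℝ) y, |gy x t|
          ≤ Real.sqrt (∫ t in Ioc (0:ℝ) y, gy x t ^ 2)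
            * Real.sqrt (∫ t in Ioc (0:ℝ) y, (1:ℝ) ^ 2) := by
        have cs := my_cs (volume.restrict (Ioc (0:ℝ) y)) (fun t => gy x t) (fun _ => (1:ℝ))
          (((cgyx x).mono ((Ioc_subset_Icc_self).trans
            (Icc_subset_Icc le_rfl hy.2))).aestronglyMeasurable measurableSet_Ioc)
          aestronglyMeasurable_const
          (((gyIntIcc x).mono_set (Ioc_subset_Icc_self.trans (Icc_subset_Icc le_rfl hy.2))))
          (integrableOn_const (ne_of_lt (by
            rw [Real.volume_Ioc]; exact ENNReal.ofReal_lt_top)))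
        simpa using cs
      have h3 : ∫ t in Ioc (0:ℝ) y, gy x t ^ 2 ≤ I2 := by
        rw [← hIoc]
        apply setIntegral_mono_set ((gyIntIcc x).mono_set Ioc_subset_Icc_self)
          (Filter.Eventually.of_forall fun t => sq_nonneg _)
        exact HasSubset.Subset.eventuallyLE (Ioc_subset_Ioc le_rfl hy.2)
      have h4 : Real.sqrt (∫ t in Ioc (0:ℝ) y, (1:ℝ) ^ 2) ≤ 1 := by
        rw [show (fun _ : ℝ => (1:ℝ) ^ 2) = fun _ : ℝ => (1:ℝ) by funext; norm_num]
        rw [setIntegral_const, smul_eq_mul, mul_one, measureReal_def, Real.volume_Ioc]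
        have hle1 : (ENNReal.ofReal (y - 0)).toReal ≤ 1 := by
          apply ENNReal.toReal_le_of_le_ofReal one_pos.le
          apply ENNReal.ofReal_le_ofReal
          linarith [hy.2]
        calc Real.sqrt (ENNReal.ofReal (y - 0)).toReal ≤ Real.sqrt 1 :=
              Real.sqrt_le_sqrt hle1
          _ = 1 := Real.sqrt_one
      calc |∫ t in Ioc (0:ℝ) y, gy x t| ≤ ∫ t in Ioc (0:ℝ) y, |gy x t| := h1
        _ ≤ Real.sqrt (∫ t in Ioc (0:ℝ) y, gy x t ^ 2)
            * Real.sqrt (∫ t in Ioc (0:ℝ) y, (1:ℝ) ^ 2) := h2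
        _ ≤ Real.sqrt I2 * 1 :=
            mul_le_mul (Real.sqrt_le_sqrt h3) h4 (Real.sqrt_nonneg _) (Real.sqrt_nonneg _)
        _ = Real.sqrt I2 := mul_one _
    calc g x y ^ 2 = |g x y| ^ 2 := (_root_.sq_abs _).symm
      _ ≤ Real.sqrt I2 ^ 2 := by
          apply pow_le_pow_left₀ (abs_nonneg _) habs
      _ = I2 := Real.sq_sqrt hI2nn
  -- Poincare: A ≤ B
  have hAB : A ≤ B := by
    have eA : A = ∫ x : ℝ, ∫ t, g x t ^ 2 ∂ν := by
      rw [Adef, hQr, integral_prod _ hA']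
    have eB : B = ∫ x : ℝ, ∫ t, gy x t ^ 2 ∂ν := by
      rw [Bdef, hQr, integral_prod _ hB']
    rw [eA, eB]
    apply integral_mono hA'.integral_prod_left hB'.integral_prod_left
    intro x
    have hle : ∀ t ∈ Ioo (0:ℝ) 1, g x t ^ 2 ≤ ∫ s, gy x s ^ 2 ∂ν :=
      fun t ht => poinc_pt x t ⟨le_of_lt ht.1, le_of_lt ht.2⟩
    calc ∫ t, g x t ^ 2 ∂ν ≤ ∫ _ in Ioo (0:ℝ) 1, (∫ s, gy x s ^ 2 ∂ν) := by
          apply setIntegral_mono_on ((gIntIcc x).mono_set Ioo_subset_Icc_self)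
            (integrableOn_const (ne_of_lt (by rw [Real.volume_Ioo]; exact ENNReal.ofReal_lt_top)))
            measurableSet_Ioo hle
      _ = ∫ s, gy x s ^ 2 ∂ν := by
          rw [setIntegral_const, measureReal_def, Real.volume_Ioo, smul_eq_mul]
          norm_num
  -- Agmon bound for the x-slice L² norm
  have agmon : ∀ y ∈ Icc (0:ℝ) 1,
      ∫ x : ℝ, g x y ^ 2 ≤ 2 * Real.sqrt A * Real.sqrt B := by
    intro y hy
    set P : ℝ × ℝ → ℝ := fun q => |g q.1 q.2| * |gy q.1 q.2| with Pdef
    have hPc : ContinuousOn P Q := by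
      apply ContinuousOn.mul
      · exact (hgc.mono (prod_mono_right Ioo_subset_Icc_self)).abs
      · exact (hgyc.mono (prod_mono_right Ioo_subset_Icc_self)).abs
    have hPm : AEStronglyMeasurable P ((volume : Measure ℝ).prod ν) := by
      rw [← hQr]; exact hPc.aestronglyMeasurable measQ
    have hgm : AEStronglyMeasurable (fun q : ℝ × ℝ => g q.1 q.2) (volume.restrict Q) :=
      (hgc.mono (prod_mono_right Ioo_subset_Icc_self)).aestronglyMeasurable measQ
    have hgym : AEStronglyMeasurable (fun q : ℝ × ℝ => gy q.1 q.2) (volume.restrict Q) :=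
      (hgyc.mono (prod_mono_right Ioo_subset_Icc_self)).aestronglyMeasurable measQ
    have hP : Integrable P ((volume : Measure ℝ).prod ν) := by
      apply Integrable.mono (hA'.add hB') hPm
      filter_upwards with q
      rw [Real.norm_eq_abs, Real.norm_eq_abs, Pdef]
      have h1 : |g q.1 q.2| * |gy q.1 q.2| ≤ g q.1 q.2 ^ 2 + gy q.1 q.2 ^ 2 := by
        nlinarith [sq_nonneg (|g q.1 q.2| - |gy q.1 q.2|), _root_.sq_abs (g q.1 q.2),
          _root_.sq_abs (gy q.1 q.2), abs_nonneg (g q.1 q.2), abs_nonneg (gy q.1 q.2)]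
      rw [_root_.abs_of_nonneg (mul_nonneg (abs_nonneg _) (abs_nonneg _))]
      exact h1.trans (le_abs_self _)
    have cs2 : ∫ q in Q, P q ≤ Real.sqrt A * Real.sqrt B := by
      have := my_cs (volume.restrict Q) (fun q : ℝ × ℝ => g q.1 q.2)
        (fun q : ℝ × ℝ => gy q.1 q.2) hgm hgym hA hB
      simpa [Pdef] using this
    -- pointwise in x
    have ptw : ∀ x : ℝ, g x y ^ 2 ≤ 2 * ∫ t, P (x, t) ∂ν := by
      intro x
      have e1 : g x y ^ 2 = ∫ t in Ioc (0:ℝ) y, 2 * g x t * gy x t := by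
        rw [ftc1 x y hy, intervalIntegral.integral_of_le hy.1]
      have prodIntIcc : IntegrableOn (fun t => 2 * P (x, t)) (Icc (0:ℝ) 1) volume := by
        apply ContinuousOn.integrableOn_compact isCompact_Icc
        exact continuousOn_const.mul (((cgx x).abs).mul ((cgyx x).abs))
      have e2 : ∫ t in Ioc (0:ℝ) y, 2 * g x t * gy x t
          ≤ ∫ t in Ioc (0:ℝ) y, 2 * P (x, t) := by
        apply setIntegral_mono_on
        · apply IntegrableOn.mono_set _ (Ioc_subset_Icc_self.trans (Icc_subset_Icc le_rfl hy.2))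
          apply ContinuousOn.integrableOn_compact isCompact_Icc
          exact (continuousOn_const.mul (cgx x)).mul (cgyx x)
        · exact prodIntIcc.mono_set (Ioc_subset_Icc_self.trans (Icc_subset_Icc le_rfl hy.2))
        · exact measurableSet_Ioc
        · intro t _
          rw [Pdef]
          calc 2 * g x t * gy x t ≤ |2 * g x t * gy x t| := le_abs_self _
            _ = 2 * (|g x t| * |gy x t|) := by
                rw [abs_mul, abs_mul]
                norm_num
                ring
      have e3 : ∫ t in Ioc (0:ℝ) y, 2 * P (x, t) ≤ ∫ t in Ioc (0:ℝ) 1, 2 * P (x, t) := by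
        apply setIntegral_mono_set (prodIntIcc.mono_set Ioc_subset_Icc_self)
          (Filter.Eventually.of_forall fun t => by
            rw [Pdef]; positivity)
        exact HasSubset.Subset.eventuallyLE (Ioc_subset_Ioc le_rfl hy.2)
      have e4 : ∫ t in Ioc (0:ℝ) 1, 2 * P (x, t) = 2 * ∫ t, P (x, t) ∂ν := by
        rw [integral_Ioc_eq_integral_Ioo, νdef, integral_const_mul]
      linarith [e1, e2, e3, e4]
    have hFint : Integrable (fun x : ℝ => 2 * ∫ t, P (x, t) ∂ν) volume :=
      (hP.integral_prod_left).const_mul 2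
    calc ∫ x : ℝ, g x y ^ 2 ≤ ∫ x : ℝ, 2 * ∫ t, P (x, t) ∂ν :=
          integral_mono (hL2 y hy) hFint ptw
      _ = 2 * ∫ x : ℝ, ∫ t, P (x, t) ∂ν := integral_const_mul _ _
      _ = 2 * ∫ q, P q ∂((volume : Measure ℝ).prod ν) := by rw [integral_prod _ hP]
      _ = 2 * ∫ q in Q, P q := by rw [hQr]
      _ ≤ 2 * (Real.sqrt A * Real.sqrt B) := by linarith [cs2]
      _ = 2 * Real.sqrt A * Real.sqrt B := by ring
  -- Bernstein in x for each slice
  have bern : ∀ y ∈ Icc (0:ℝ) 1, ∀ x : ℝ,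
      |g x y| ≤ 3 * (2:ℝ) ^ ((k:ℝ)/2) * Real.sqrt (∫ x' : ℝ, g x' y ^ 2) := by
    intro y hy
    apply my_bernstein k (fun x => g x y) (cgy y hy) (hL1 y hy) (hL2 y hy)
    intro ξ hξ
    rw [Real.fourier_real_eq_integral_exp_smul]
    have := hFT y hy ξ hξ
    simpa [smul_eq_mul] using this
  have h32 : 3 * Real.sqrt 2 ≤ 5 := by
    nlinarith [Real.sq_sqrt (by norm_num : (0:ℝ) ≤ 2), Real.sqrt_nonneg 2]
  constructor
  · intro x y hy
    have step := bern y hy x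
    have step2 : Real.sqrt (∫ x' : ℝ, g x' y ^ 2)
        ≤ Real.sqrt 2 * (Real.sqrt (Real.sqrt A) * Real.sqrt (Real.sqrt B)) := by
      calc Real.sqrt (∫ x' : ℝ, g x' y ^ 2)
          ≤ Real.sqrt (2 * (Real.sqrt A * Real.sqrt B)) := by
            apply Real.sqrt_le_sqrt
            calc ∫ x' : ℝ, g x' y ^ 2 ≤ 2 * Real.sqrt A * Real.sqrt B := agmon y hy
              _ = 2 * (Real.sqrt A * Real.sqrt B) := by ring
        _ = Real.sqrt 2 * (Real.sqrt (Real.sqrt A) * Real.sqrt (Real.sqrt B)) := by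
            rw [Real.sqrt_mul (by norm_num : (0:ℝ) ≤ 2),
              Real.sqrt_mul (Real.sqrt_nonneg A)]
    calc |g x y| ≤ 3 * (2:ℝ) ^ ((k:ℝ)/2) * Real.sqrt (∫ x' : ℝ, g x' y ^ 2) := step
      _ ≤ 3 * (2:ℝ) ^ ((k:ℝ)/2)
            * (Real.sqrt 2 * (Real.sqrt (Real.sqrt A) * Real.sqrt (Real.sqrt B))) := by
          apply mul_le_mul_of_nonneg_left step2 (by positivity)
      _ = (3 * Real.sqrt 2) * ((2:ℝ) ^ ((k:ℝ)/2)
            * (Real.sqrt (Real.sqrt A) * Real.sqrt (Real.sqrt B))) := by ring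
      _ ≤ 5 * ((2:ℝ) ^ ((k:ℝ)/2) * (Real.sqrt (Real.sqrt A) * Real.sqrt (Real.sqrt B))) := by
          apply mul_le_mul_of_nonneg_right h32 (by positivity)
      _ = 5 * (2:ℝ) ^ ((k:ℝ)/2) * Real.sqrt (Real.sqrt A) * Real.sqrt (Real.sqrt B) := by ring
  · have key : Real.sqrt (Real.sqrt A) * Real.sqrt (Real.sqrt B) ≤ Real.sqrt B := by
      calc Real.sqrt (Real.sqrt A) * Real.sqrt (Real.sqrt B)
          ≤ Real.sqrt (Real.sqrt B) * Real.sqrt (Real.sqrt B) :=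
            mul_le_mul_of_nonneg_right
              (Real.sqrt_le_sqrt (Real.sqrt_le_sqrt hAB)) (Real.sqrt_nonneg _)
        _ = Real.sqrt B := Real.mul_self_sqrt (Real.sqrt_nonneg B)
    calc 5 * (2:ℝ) ^ ((k:ℝ)/2) * Real.sqrt (Real.sqrt A) * Real.sqrt (Real.sqrt B)
        = 5 * (2:ℝ) ^ ((k:ℝ)/2) * (Real.sqrt (Real.sqrt A) * Real.sqrt (Real.sqrt B)) := by
          ring
      _ ≤ 5 * (2:ℝ) ^ ((k:ℝ)/2) * Real.sqrt B :=
          mul_le_mul_of_nonneg_left key (by positivity)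
end
end

section
/- There is a universal constant C > 0 (depending only on the annulus {3/4 ≤ |τ| ≤ 8/3}) such that the following holds. Let k ∈ ℤ and let u : ℝ × [0,1] → ℝ be continuous with continuous partial derivative ∂_x u, with u(·,y) integrable and square-integrable for each y, u square-integrable on S = ℝ × (0,1), and suppose that for each y ∈ [0,1] the partial Fourier transform û(ξ,y) in x vanishes for all ξ with |ξ| outside [ (3/4)·2^k, (8/3)·2^k ]. Define v(x,y) = −∫₀^y ∂_x u(x,y') dy'. Then sup_{(x,y) ∈ ℝ×[0,1]} |v(x,y)| ≤ C 2^{3k/2} ‖u‖_{L²(S)}. -/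
noncomputable section

open MeasureTheory Set intervalIntegral
open Real Complex FourierTransform

lemma aux_cs {α : Type*} [MeasurableSpace α] {μ : Measure α} [IsFiniteMeasure μ]
    {φ : α → ℝ} (hnn : ∀ x, 0 ≤ φ x) (hφ : Integrable φ μ)
    (hφ2 : Integrable (fun x => φ x ^ 2) μ) :
    ∫ x, φ x ∂μ ≤ Real.sqrt (μ Set.univ).toReal * Real.sqrt (∫ x, φ x ^ 2 ∂μ) := by
  set A := ∫ x, φ x ^ 2 ∂μ with hA
  have hA0 : 0 ≤ A := integral_nonneg fun x => sq_nonneg _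
  set V := (μ Set.univ).toReal with hV
  have hV0 : 0 ≤ V := ENNReal.toReal_nonneg
  rcases eq_or_lt_of_le hA0 with h0 | hApos
  · have hz2 : ∀ᵐ x ∂μ, φ x ^ 2 = 0 :=
      (integral_eq_zero_iff_of_nonneg (fun x => sq_nonneg (φ x)) hφ2).1 h0.symm
    have hz : φ =ᵐ[μ] fun _ => 0 := by
      filter_upwards [hz2] with x hx
      exact pow_eq_zero_iff two_ne_zero |>.1 hx
    rw [integral_congr_ae hz, integral_zero]
    positivity
  · rcases eq_or_lt_of_le hV0 with hv0 | hVpos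
    · have : μ Set.univ = 0 := by
        have := measure_ne_top μ Set.univ
        rcases ENNReal.toReal_eq_zero_iff (μ Set.univ) |>.1 hv0.symm with h | h
        · exact h
        · exact absurd h this
      rw [Measure.measure_univ_eq_zero.1 this]
      simp
      positivity
    · set t := Real.sqrt V / Real.sqrt A with hts
      have hsA : 0 < Real.sqrt A := Real.sqrt_pos.2 hApos
      have hsV : 0 < Real.sqrt V := Real.sqrt_pos.2 hVpos
      have ht : 0 < t := div_pos hsV hsA
      have key : ∀ x, φ x ≤ t / 2 * φ x ^ 2 + 1 / (2 * t) := by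
        intro x
        have h1 := sq_nonneg (t * φ x - 1)
        have h2 := hnn x
        rw [show t / 2 * φ x ^ 2 + 1 / (2 * t) = (t ^ 2 * φ x ^ 2 + 1) / (2 * t) by
          field_simp]
        rw [le_div_iff₀ (by positivity)]
        nlinarith
      have hint : ∫ x, φ x ∂μ ≤ ∫ x, (t / 2 * φ x ^ 2 + 1 / (2 * t)) ∂μ :=
        integral_mono hφ ((hφ2.const_mul _).add (integrable_const _)) key
      rw [integral_add (hφ2.const_mul _) (integrable_const _), MeasureTheory.integral_const_mul,
        MeasureTheory.integral_const, smul_eq_mul, measureReal_def] at hint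
      have e1 : Real.sqrt A * Real.sqrt A = A := Real.mul_self_sqrt hA0
      have e2 : Real.sqrt V * Real.sqrt V = V := Real.mul_self_sqrt hV0
      have heq : t / 2 * A + V * (1 / (2 * t)) = Real.sqrt V * Real.sqrt A := by
        rw [hts]
        field_simp
        nlinarith [e1, e2, hsA, hsV]
      linarith [hint, heq.symm.le]

lemma aux_pow (k : ℤ) :
    ((2:ℝ) ^ k) * Real.sqrt ((2:ℝ) ^ k) = (2:ℝ) ^ (3 * (k:ℝ) / 2) := by
  have h : ((2:ℝ) ^ k) = (2:ℝ) ^ ((k:ℝ)) := (Real.rpow_intCast 2 k).symm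
  rw [h, Real.sqrt_eq_rpow, ← Real.rpow_mul (by norm_num), ← Real.rpow_add (by norm_num)]
  congr 1
  ring

lemma aux_onevar (R : ℝ) (hR : 0 < R) (f d : ℝ → ℝ)
    (hfc : Continuous f) (hdc : ∀ x, HasDerivAt f (d x) x)
    (hfi : Integrable f) (hfi2 : Integrable (fun x => f x ^ 2))
    (hsupp : ∀ ξ : ℝ, R < |ξ| → 𝓕 (fun t => (f t : ℂ)) ξ = 0) (x : ℝ) :
    |d x| ≤ 2 * π * R * Real.sqrt (2 * R) * Real.sqrt (∫ t : ℝ, f t ^ 2) := by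
  set F : ℝ → ℂ := fun t => (f t : ℂ) with hF
  have hFc : Continuous F := Complex.continuous_ofReal.comp hfc
  have hFi : Integrable F := hfi.ofReal
  set g : ℝ → ℂ := 𝓕 F with hg
  have hgc : Continuous g :=
    VectorFourier.fourierIntegral_continuous Real.continuous_fourierChar
      (by exact continuous_inner) hFi
  have hgz : ∀ ξ : ℝ, ξ ∉ Set.Icc (-R) R → g ξ = 0 := by
    intro ξ hξ
    apply hsupp
    simp only [Set.mem_Icc, not_and_or, not_le] at hξ
    rcases hξ with h | h
    · exact lt_of_lt_of_le (by linarith) (neg_le_abs ξ)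
    · exact lt_of_lt_of_le h (le_abs_self ξ)
  have hgsupp : HasCompactSupport g := HasCompactSupport.intro isCompact_Icc hgz
  have hgi : Integrable g := hgc.integrable_of_hasCompactSupport hgsupp
  have hgi' : Integrable (fun ξ : ℝ => (ξ : ℝ) • g ξ) := by
    refine (continuous_id.smul hgc).integrable_of_hasCompactSupport
      (HasCompactSupport.intro (K := Set.Icc (-R) R) isCompact_Icc fun ξ hξ => ?_)
    simp [hgz ξ hξ]
  -- inversion
  have hinvfun : 𝓕⁻ g = F := hFc.fourierInv_fourier_eq hFi hgi
  have hinv : ∀ t : ℝ, 𝓕 g (-t) = F t := by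
    intro t
    rw [← Real.fourierInv_eq_fourier_neg, hinvfun]
  -- derivative identity
  set M : ℝ → ℂ := fun ξ : ℝ => (-2 * ↑π * Complex.I * ↑ξ) • g ξ with hM
  have hD : HasDerivAt (𝓕 g) (𝓕 M (-x)) (-x) :=
    Real.hasDerivAt_fourier hgi hgi' (-x)
  have hDF : HasDerivAt F ((-1 : ℝ) • 𝓕 M (-x)) x := by
    have hneg : HasDerivAt (fun t : ℝ => -t) (-1 : ℝ) x := (hasDerivAt_id x).neg
    have hcomp := HasDerivAt.scomp x hD hneg
    have : ((𝓕 g) ∘ fun t : ℝ => -t) = F := by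
      funext t
      simp only [Function.comp_apply]
      exact hinv t
    rwa [this] at hcomp
  have hDF2 : HasDerivAt F ((d x : ℂ)) x :=
    Complex.ofRealCLM.hasFDerivAt.comp_hasDerivAt x (hdc x)
  have hder_eq : (d x : ℂ) = (-1 : ℝ) • 𝓕 M (-x) := hDF2.unique hDF
  -- Plancherel via multiplication formula
  have hgneg_i : Integrable (fun ξ : ℝ => g (-ξ)) := by
    refine ((hgc.comp continuous_neg).integrable_of_hasCompactSupport
      (HasCompactSupport.intro (K := Set.Icc (-R) R) isCompact_Icc fun ξ hξ => ?_))
    apply hgz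
    simp only [Set.mem_Icc, not_and_or, not_le] at hξ ⊢
    rcases hξ with h | h
    · exact Or.inr (by linarith)
    · exact Or.inl (by linarith)
  have flipeq : (innerₗ ℝ).flip = innerₗ ℝ := by
    apply LinearMap.ext; intro a; apply LinearMap.ext; intro b
    simp [LinearMap.flip_apply, real_inner_comm]
  have mult := VectorFourier.integral_fourierIntegral_smul_eq_flip
    (e := Real.fourierChar) (L := innerₗ ℝ) (μ := volume) (ν := volume)
    (f := F) (g := fun ξ : ℝ => g (-ξ))
    Real.continuous_fourierChar (by exact continuous_inner) hFi hgneg_i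
  rw [flipeq] at mult
  have hflip : ∀ t : ℝ,
      VectorFourier.fourierIntegral Real.fourierChar volume (innerₗ ℝ)
        (fun ξ : ℝ => g (-ξ)) t = F t := by
    intro t
    have : 𝓕 (fun ξ : ℝ => g (-ξ)) t = 𝓕⁻ g t := by
      rw [Real.fourierInv_eq_fourier_comp_neg]
    rw [show VectorFourier.fourierIntegral Real.fourierChar volume (innerₗ ℝ)
        (fun ξ : ℝ => g (-ξ)) t = 𝓕 (fun ξ : ℝ => g (-ξ)) t from rfl, this, hinvfun]
  have mult2 : ∫ ξ : ℝ, g ξ * g (-ξ) = ∫ t : ℝ, F t * F t := by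
    have h1 : ∀ ξ : ℝ, (VectorFourier.fourierIntegral Real.fourierChar volume (innerₗ ℝ)
        F ξ) • g (-ξ) = g ξ * g (-ξ) := fun ξ => by rw [smul_eq_mul]; rfl
    calc ∫ ξ : ℝ, g ξ * g (-ξ)
        = ∫ ξ : ℝ, (VectorFourier.fourierIntegral Real.fourierChar volume (innerₗ ℝ)
            F ξ) • g (-ξ) := by simp_rw [h1]
      _ = ∫ t : ℝ, F t • (VectorFourier.fourierIntegral Real.fourierChar volume (innerₗ ℝ)
            (fun ξ : ℝ => g (-ξ)) t) := mult
      _ = ∫ t : ℝ, F t * F t := by simp_rw [hflip, smul_eq_mul]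
  have hconj : ∀ ξ : ℝ, g (-ξ) = (starRingEnd ℂ) (g ξ) := by
    intro ξ
    rw [hg, Real.fourier_real_eq, Real.fourier_real_eq, ← integral_conj]
    refine integral_congr_ae (Filter.Eventually.of_forall fun v => ?_)
    simp only [Circle.smul_def, Real.fourierChar_apply, smul_eq_mul, hF]
    rw [map_mul, ← Complex.exp_conj, map_mul, Complex.conj_ofReal, Complex.conj_I,
      Complex.conj_ofReal]
    rw [show ((2 * π * -(v * ξ) : ℝ) : ℂ) * (-Complex.I)
        = ((2 * π * -(v * -ξ) : ℝ) : ℂ) * Complex.I by push_cast; ring]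
  have plancherel : ∫ ξ : ℝ, ‖g ξ‖ ^ 2 = ∫ t : ℝ, f t ^ 2 := by
    have lhs : ∫ ξ : ℝ, g ξ * g (-ξ) = ((∫ ξ : ℝ, ‖g ξ‖ ^ 2 : ℝ) : ℂ) := by
      have hpt : ∀ ξ : ℝ, g ξ * g (-ξ) = ((‖g ξ‖ ^ 2 : ℝ) : ℂ) := by
        intro ξ
        rw [hconj ξ, Complex.mul_conj]
        norm_cast
        rw [Complex.normSq_eq_norm_sq]
      rw [integral_congr_ae (Filter.Eventually.of_forall hpt)]
      exact _root_.integral_ofReal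
    have rhs : ∫ t : ℝ, F t * F t = ((∫ t : ℝ, f t ^ 2 : ℝ) : ℂ) := by
      have hpt : ∀ t : ℝ, F t * F t = ((f t ^ 2 : ℝ) : ℂ) := by
        intro t; push_cast [hF]; ring
      rw [integral_congr_ae (Filter.Eventually.of_forall hpt)]
      exact _root_.integral_ofReal
    have := mult2
    rw [lhs, rhs] at this
    exact_mod_cast this
  -- norm bound
  have hnorm : ‖𝓕 M (-x)‖ ≤ ∫ ξ : ℝ, ‖M ξ‖ :=
    VectorFourier.norm_fourierIntegral_le_integral_norm Real.fourierChar volume (innerₗ ℝ) M (-x)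
  have hMz : ∀ ξ : ℝ, ξ ∉ Set.Icc (-R) R → ‖M ξ‖ = 0 := by
    intro ξ hξ; simp [hM, hgz ξ hξ]
  have hMnorm : ∫ ξ : ℝ, ‖M ξ‖ = ∫ ξ in Set.Icc (-R) R, ‖M ξ‖ :=
    (setIntegral_eq_integral_of_forall_compl_eq_zero fun ξ hξ => hMz ξ hξ).symm
  have hMc : Continuous M := by
    exact ((continuous_const.mul Complex.continuous_ofReal).smul hgc)
  have hMbound : ∫ ξ in Set.Icc (-R) R, ‖M ξ‖ ≤
      ∫ ξ in Set.Icc (-R) R, 2 * π * R * ‖g ξ‖ := by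
    refine setIntegral_mono_on (hMc.norm.integrableOn_Icc)
      ((hgc.norm.integrableOn_Icc).const_mul _) measurableSet_Icc fun ξ hξ => ?_
    have h1 : ‖M ξ‖ = (2 * π * |ξ|) * ‖g ξ‖ := by
      rw [hM]
      simp only [norm_smul, norm_mul, norm_neg, Complex.norm_real, Complex.norm_I,
        Real.norm_eq_abs, Real.norm_ofNat]
      rw [_root_.abs_of_nonneg Real.pi_pos.le]
      norm_num
    rw [h1]
    have h2 : |ξ| ≤ R := abs_le.2 ⟨hξ.1, hξ.2⟩
    have h3 := mul_le_mul_of_nonneg_right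
      (mul_le_mul_of_nonneg_left h2 (by positivity : (0:ℝ) ≤ 2 * π)) (norm_nonneg (g ξ))
    linarith
  haveI : IsFiniteMeasure (volume.restrict (Set.Icc (-R) R)) := by
    constructor
    rw [Measure.restrict_apply_univ]
    exact measure_Icc_lt_top
  have hCS : ∫ ξ in Set.Icc (-R) R, ‖g ξ‖ ≤
      Real.sqrt (2 * R) * Real.sqrt (∫ ξ in Set.Icc (-R) R, ‖g ξ‖ ^ 2) := by
    have := aux_cs (μ := volume.restrict (Set.Icc (-R) R)) (φ := fun ξ => ‖g ξ‖)
      (fun ξ => norm_nonneg _) (hgc.norm.integrableOn_Icc)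
      ((hgc.norm.pow 2).integrableOn_Icc)
    have hvol : ((volume.restrict (Set.Icc (-R) R)) Set.univ).toReal = 2 * R := by
      rw [Measure.restrict_apply_univ, Real.volume_Icc]
      rw [ENNReal.toReal_ofReal (by linarith)]
      ring
    rw [hvol] at this
    exact this
  have hg2 : ∫ ξ in Set.Icc (-R) R, ‖g ξ‖ ^ 2 = ∫ t : ℝ, f t ^ 2 := by
    rw [setIntegral_eq_integral_of_forall_compl_eq_zero fun ξ hξ => by simp [hgz ξ hξ]]
    exact plancherel
  -- put everything together
  have habs : |d x| = ‖𝓕 M (-x)‖ := by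
    have : ‖(d x : ℂ)‖ = ‖(-1 : ℝ) • 𝓕 M (-x)‖ := by rw [hder_eq]
    rw [Complex.norm_real, Real.norm_eq_abs] at this
    rw [this, norm_smul]
    simp
  rw [habs]
  calc ‖𝓕 M (-x)‖ ≤ ∫ ξ : ℝ, ‖M ξ‖ := hnorm
    _ = ∫ ξ in Set.Icc (-R) R, ‖M ξ‖ := hMnorm
    _ ≤ ∫ ξ in Set.Icc (-R) R, 2 * π * R * ‖g ξ‖ := hMbound
    _ = 2 * π * R * ∫ ξ in Set.Icc (-R) R, ‖g ξ‖ := integral_const_mul _ _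
    _ ≤ 2 * π * R * (Real.sqrt (2 * R) * Real.sqrt (∫ ξ in Set.Icc (-R) R, ‖g ξ‖ ^ 2)) := by
        have h0 : (0:ℝ) ≤ 2 * π * R := by positivity
        exact mul_le_mul_of_nonneg_left hCS h0
    _ = 2 * π * R * Real.sqrt (2 * R) * Real.sqrt (∫ t : ℝ, f t ^ 2) := by
        rw [hg2]; ring

/-- Bound on the vertical velocity reconstructed from a
horizontally spectrally localized horizontal velocity via the divergence-free
condition: `sup |v| ≤ C 2^{3k/2} ‖u‖_{L²(S)}` where `v(x,y) = -∫₀^y ∂_x u(x,y') dy'`. -/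
theorem bernstein_vertical_velocity :
    ∃ C : ℝ, 0 < C ∧
      ∀ (k : ℤ) (u ux : ℝ → ℝ → ℝ),
        ContinuousOn (fun q : ℝ × ℝ => u q.1 q.2) ((univ : Set ℝ) ×ˢ Icc (0:ℝ) 1) →
        ContinuousOn (fun q : ℝ × ℝ => ux q.1 q.2) ((univ : Set ℝ) ×ˢ Icc (0:ℝ) 1) →
        (∀ x : ℝ, ∀ y ∈ Icc (0:ℝ) 1, HasDerivAt (fun x' => u x' y) (ux x y) x) →
        (∀ y ∈ Icc (0:ℝ) 1, Integrable (fun x => u x y)) →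
        (∀ y ∈ Icc (0:ℝ) 1, Integrable (fun x => u x y ^ 2)) →
        IntegrableOn (fun q : ℝ × ℝ => u q.1 q.2 ^ 2) ((univ : Set ℝ) ×ˢ Ioo (0:ℝ) 1) →
        (∀ y ∈ Icc (0:ℝ) 1, ∀ ξ : ℝ,
          ¬ (3/4 * (2:ℝ) ^ k ≤ |ξ| ∧ |ξ| ≤ 8/3 * (2:ℝ) ^ k) →
          (∫ x : ℝ, Complex.exp ((((-2) * Real.pi * x * ξ : ℝ) : ℂ) * Complex.I) *
            (u x y : ℂ)) = 0) →
        ∀ x : ℝ, ∀ y ∈ Icc (0:ℝ) 1,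
          |(-(∫ y' in (0:ℝ)..y, ux x y'))| ≤
            C * (2:ℝ) ^ (3 * (k : ℝ) / 2) *
              Real.sqrt (∫ q in (univ : Set ℝ) ×ˢ Ioo (0:ℝ) 1, u q.1 q.2 ^ 2) := by
  refine ⟨2 * π * (8/3) * Real.sqrt (16/3), by positivity, ?_⟩
  intro k u ux hu hux hderiv hint1 hint2 hintS hfour x y hy
  set a : ℝ := (2:ℝ) ^ k with ha
  have ha0 : 0 < a := by positivity
  set R : ℝ := 8/3 * a with hR
  have hR0 : 0 < R := by positivity
  set c : ℝ := 2 * π * R * Real.sqrt (2 * R) with hc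
  have hc0 : 0 ≤ c := by positivity
  set h : ℝ → ℝ := fun t => ∫ x' : ℝ, u x' t ^ 2 with hh
  have hh0 : ∀ t, 0 ≤ h t := fun t => integral_nonneg fun x' => sq_nonneg _
  -- pointwise bound from the one-variable lemma
  have hpt : ∀ x' : ℝ, ∀ t ∈ Icc (0:ℝ) 1, |ux x' t| ≤ c * Real.sqrt (h t) := by
    intro x' t ht
    have hcont1 : Continuous fun s => u s t := by
      rw [← continuousOn_univ]
      exact hu.comp ((continuous_id.prodMk continuous_const).continuousOn)
        (fun s _ => ⟨trivial, ht⟩)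
    have hsupp : ∀ ξ : ℝ, R < |ξ| → 𝓕 (fun s => ((u s t : ℝ) : ℂ)) ξ = 0 := by
      intro ξ hξ
      have h4 := hfour t ht ξ (by
        rintro ⟨-, h2⟩
        exact absurd h2 (not_le.2 hξ))
      rw [Real.fourier_real_eq_integral_exp_smul]
      rw [← h4]
      refine integral_congr_ae (Filter.Eventually.of_forall fun v => ?_)
      simp only [smul_eq_mul]
    exact aux_onevar R hR0 (fun s => u s t) (fun s => ux s t) hcont1
      (fun s => hderiv s t ht) (hint1 t ht) (hint2 t ht) hsupp x'
  -- Fubini facts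
  have hprod : Integrable (fun q : ℝ × ℝ => u q.1 q.2 ^ 2)
      ((volume : Measure ℝ).prod (volume.restrict (Ioo 0 1))) := by
    have h1 := hintS
    rw [IntegrableOn, Measure.volume_eq_prod, ← Measure.prod_restrict,
      Measure.restrict_univ] at h1
    exact h1
  have hhi : IntegrableOn h (Ioo 0 1) := hprod.integral_prod_right
  have hint_eq : ∫ q in (univ : Set ℝ) ×ˢ Ioo (0:ℝ) 1, u q.1 q.2 ^ 2
      = ∫ t in Ioo (0:ℝ) 1, h t := by
    rw [show (∫ q in (univ : Set ℝ) ×ˢ Ioo (0:ℝ) 1, u q.1 q.2 ^ 2)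
        = ∫ q, u q.1 q.2 ^ 2 ∂((volume : Measure ℝ).prod (volume.restrict (Ioo 0 1))) by
      rw [Measure.volume_eq_prod, ← Measure.prod_restrict, Measure.restrict_univ]]
    exact integral_prod_symm _ hprod
  haveI hfin : IsFiniteMeasure (volume.restrict (Ioc (0:ℝ) 1)) := by
    constructor
    rw [Measure.restrict_apply_univ]
    exact measure_Ioc_lt_top
  have hhIoc : IntegrableOn h (Ioc 0 1) := hhi.congr_set_ae Ioo_ae_eq_Ioc.symm
  have hsqrt_i : IntegrableOn (fun t => Real.sqrt (h t)) (Ioc 0 1) := by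
    have hmeas : AEStronglyMeasurable (fun t => Real.sqrt (h t))
        (volume.restrict (Ioc (0:ℝ) 1)) :=
      Real.continuous_sqrt.comp_aestronglyMeasurable hhIoc.aestronglyMeasurable
    refine Integrable.mono' ((integrable_const (1:ℝ)).add hhIoc) hmeas
      (Filter.Eventually.of_forall fun t => ?_)
    rw [Real.norm_eq_abs, _root_.abs_of_nonneg (Real.sqrt_nonneg _)]
    show Real.sqrt (h t) ≤ 1 + h t
    nlinarith [Real.sq_sqrt (hh0 t), Real.sqrt_nonneg (h t), sq_nonneg (Real.sqrt (h t) - 1)]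
  have hCS : ∫ t in Ioc (0:ℝ) 1, Real.sqrt (h t) ≤
      Real.sqrt (∫ t in Ioc (0:ℝ) 1, h t) := by
    have hsq : ∀ t, Real.sqrt (h t) ^ 2 = h t := fun t => Real.sq_sqrt (hh0 t)
    have h2i : Integrable (fun t => Real.sqrt (h t) ^ 2) (volume.restrict (Ioc 0 1)) :=
      hhIoc.congr (Filter.Eventually.of_forall fun t => (hsq t).symm)
    have hcs := aux_cs (μ := volume.restrict (Ioc (0:ℝ) 1)) (φ := fun t => Real.sqrt (h t))
      (fun t => Real.sqrt_nonneg _) hsqrt_i h2i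
    have hvol : ((volume.restrict (Ioc (0:ℝ) 1)) Set.univ).toReal = 1 := by
      rw [Measure.restrict_apply_univ, Real.volume_Ioc]
      norm_num
    rw [hvol, Real.sqrt_one, one_mul] at hcs
    calc ∫ t in Ioc (0:ℝ) 1, Real.sqrt (h t)
        ≤ Real.sqrt (∫ t in Ioc (0:ℝ) 1, Real.sqrt (h t) ^ 2) := hcs
      _ = Real.sqrt (∫ t in Ioc (0:ℝ) 1, h t) := by
          congr 1
          exact integral_congr_ae (Filter.Eventually.of_forall fun t => hsq t)
  have habs : ∀ t ∈ Ioc (0:ℝ) 1, |ux x t| ≤ c * Real.sqrt (h t) := fun t ht =>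
    hpt x t ⟨ht.1.le, ht.2⟩
  have huxi : IntegrableOn (fun t => |ux x t|) (Icc (0:ℝ) 1) := by
    refine ContinuousOn.integrableOn_Icc ?_
    exact (hux.comp ((continuous_const.prodMk continuous_id).continuousOn)
      (fun t ht => ⟨trivial, ht⟩)).abs
  have hceq : c = 2 * π * (8/3) * Real.sqrt (16/3) * ((2:ℝ) ^ (3 * (k:ℝ) / 2)) := by
    rw [hc, hR, show 2 * (8/3 * a) = 16/3 * a by ring,
      Real.sqrt_mul (by norm_num : (0:ℝ) ≤ 16/3) a, ← aux_pow k, ← ha]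
    ring
  calc |(-(∫ y' in (0:ℝ)..y, ux x y'))|
      = |∫ y' in (0:ℝ)..y, ux x y'| := abs_neg _
    _ ≤ ∫ y' in (0:ℝ)..y, |ux x y'| := by
        exact intervalIntegral.abs_integral_le_integral_abs hy.1
    _ ≤ ∫ y' in Ioc (0:ℝ) 1, |ux x y'| := by
        rw [intervalIntegral.integral_of_le hy.1]
        refine setIntegral_mono_set (huxi.mono_set Ioc_subset_Icc_self)
          (Filter.Eventually.of_forall fun t => abs_nonneg _)
          (HasSubset.Subset.eventuallyLE (Ioc_subset_Ioc_right hy.2))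
    _ ≤ ∫ y' in Ioc (0:ℝ) 1, c * Real.sqrt (h y') := by
        refine setIntegral_mono_on (huxi.mono_set Ioc_subset_Icc_self)
          (hsqrt_i.const_mul c) measurableSet_Ioc habs
    _ = c * ∫ y' in Ioc (0:ℝ) 1, Real.sqrt (h y') := integral_const_mul _ _
    _ ≤ c * Real.sqrt (∫ t in Ioc (0:ℝ) 1, h t) := mul_le_mul_of_nonneg_left hCS hc0
    _ = c * Real.sqrt (∫ q in (univ : Set ℝ) ×ˢ Ioo (0:ℝ) 1, u q.1 q.2 ^ 2) := by
        rw [integral_Ioc_eq_integral_Ioo, ← hint_eq]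
    _ ≤ 2 * π * (8/3) * Real.sqrt (16/3) * (2:ℝ) ^ (3 * (k:ℝ) / 2) *
          Real.sqrt (∫ q in (univ : Set ℝ) ×ˢ Ioo (0:ℝ) 1, u q.1 q.2 ^ 2) :=
        le_of_eq (by rw [hceq])
end
end
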